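/- Let F be a finite field, B = k·α with α = d-k+r, and let G_1,…,G_n be B×α matrices over F such that any k of them concatenated form an invertible B×B matrix (MDS property). Let new coding matrices G^new_ℓ = [G_{x_1}P_{x_1}, …, G_{x_d}P_{x_d}]·Z^{(ℓ)} for ℓ = 1,…,r, where P_{x_w} are α×β projection matrices and Z^{(ℓ)} are dβ×α matrices. If for some q with 1 ≤ q ≤ r the matrix [G_{y_1},…,G_{y_{k-q}}, G^new_{1},…,G^new_{q}] is invertible for all choices of k−q old nodes, then necessarily q·α ≤ β·(d-k+q). -/
import Mathlib


/-- Rank/dimension-count bound for regenerating `r` new MDS coding matrices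
from `d` helpers: if the old matrices `G₁,…,Gₙ` have the MDS property
(any `k` concatenated have full rank `B = kα`), the new matrices are
`Gⁿᵉʷ_ℓ = [G_{x₁}P_{x₁},…,G_{x_d}P_{x_d}]·Z⁽ℓ⁾`, and for some
`1 ≤ q ≤ r` every choice of `k-q` old nodes together with
`Gⁿᵉʷ₁,…,Gⁿᵉʷ_q` has full rank `B`, then `qα ≤ β(d-k+q)`. -/
theorem stmt_17 (F : Type*) [Field F] [Fintype F]
    (n k d r α β B : ℕ) (hk : 1 ≤ k) (hkd : k ≤ d) (hdn : d ≤ n)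
    (hr1 : 1 ≤ r) (hrk : r ≤ k)
    (hα : α = d - k + r) (hB : B = k * α)
    (G : Fin n → Matrix (Fin B) (Fin α) F)
    (hMDS : ∀ x : Fin k → Fin n, Function.Injective x →
        (Matrix.of fun (i : Fin B) (p : Fin k × Fin α) =>
            G (x p.1) i p.2).rank = B)
    (x : Fin d → Fin n) (hx : Function.Injective x)
    (P : Fin d → Matrix (Fin α) (Fin β) F)
    (Z : Fin r → Matrix (Fin d × Fin β) (Fin α) F)
    (Gnew : Fin r → Matrix (Fin B) (Fin α) F)
    (hGnew : ∀ ℓ : Fin r, Gnew ℓ =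
        (Matrix.of fun (i : Fin B) (p : Fin d × Fin β) =>
            (G (x p.1) * P p.1) i p.2) * Z ℓ)
    (q : ℕ) (hq1 : 1 ≤ q) (hqr : q ≤ r)
    (hrank : ∀ y : Fin (k - q) → Fin n, Function.Injective y →
        (Matrix.of fun (i : Fin B)
            (p : (Fin (k - q) × Fin α) ⊕ (Fin q × Fin α)) =>
          Sum.elim (fun s => G (y s.1) i s.2)
            (fun s => Gnew (Fin.castLE hqr s.1) i s.2) p).rank = B) :
    q * α ≤ β * (d - k + q) := by
  have hqk : q ≤ k := hqr.trans hrk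
  set m := k - q with hm
  have hmd : m ≤ d := le_trans (Nat.sub_le k q) hkd
  have hwd : ∀ w : Fin (d - m), m + (w : ℕ) < d := fun w => by omega
  set emb : Fin (d - m) → Fin d := fun w => ⟨m + w, hwd w⟩ with hemb
  set y : Fin m → Fin n := fun s => x (Fin.castLE hmd s) with hyd
  have hy : Function.Injective y := fun a b h =>
    Fin.castLE_injective hmd (hx h)
  set M : Matrix (Fin B) ((Fin m × Fin α) ⊕ (Fin q × Fin α)) F :=
    Matrix.of fun i p => Sum.elim (fun s => G (y s.1) i s.2)
      (fun s => Gnew (Fin.castLE hqr s.1) i s.2) p with hM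
  have hMrank : M.rank = B := hrank y hy
  set N : Matrix (Fin B) ((Fin m × Fin α) ⊕ (Fin (d - m) × Fin β)) F :=
    Matrix.of fun i p => Sum.elim (fun s => G (y s.1) i s.2)
      (fun s => (G (x (emb s.1)) * P (emb s.1)) i s.2) p with hN
  set C : Matrix ((Fin m × Fin α) ⊕ (Fin (d - m) × Fin β))
      ((Fin m × Fin α) ⊕ (Fin q × Fin α)) F :=
    Matrix.of fun p j =>
      Sum.elim
        (fun sa => Sum.elim
          (fun t => if sa = t then (1 : F) else 0)
          (fun lj => ∑ b : Fin β, P (Fin.castLE hmd sa.1) sa.2 b *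
            Z (Fin.castLE hqr lj.1) (Fin.castLE hmd sa.1, b) lj.2) j)
        (fun wb => Sum.elim (fun _ => (0 : F))
          (fun lj => Z (Fin.castLE hqr lj.1) (emb wb.1, wb.2) lj.2) j) p
      with hC
  set e : (Fin m ⊕ Fin (d - m)) ≃ Fin d :=
    finSumFinEquiv.trans (finCongr (Nat.add_sub_cancel' hmd)) with he
  have he1 : ∀ s : Fin m, e (Sum.inl s) = Fin.castLE hmd s := by
    intro s; rw [he]; apply Fin.ext; simp
  have he2 : ∀ w : Fin (d - m), e (Sum.inr w) = emb w := by
    intro w; rw [he]; apply Fin.ext; simp [hemb]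
  have key : M = N * C := by
    ext i p
    cases p with
    | inl t =>
      simp only [hM, hN, hC, Matrix.mul_apply, Matrix.of_apply, Sum.elim_inl,
        Sum.elim_inr, Fintype.sum_sum_type, mul_ite, mul_one, mul_zero]
      simp [Finset.sum_ite_eq']
    | inr lj =>
      obtain ⟨ℓ, j⟩ := lj
      have hg := hGnew (Fin.castLE hqr ℓ)
      simp only [hM, hN, hC, Matrix.mul_apply, Matrix.of_apply, Sum.elim_inl,
        Sum.elim_inr, Fintype.sum_sum_type, hg]
      rw [← Fintype.sum_equiv (e.prodCongr (Equiv.refl (Fin β)))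
        (fun u : (Fin m ⊕ Fin (d - m)) × Fin β =>
          (∑ a, G (x (e u.1)) i a * P (e u.1) a u.2) *
            Z (Fin.castLE hqr ℓ) (e u.1, u.2) j)
        (fun p : Fin d × Fin β =>
          (∑ a, G (x p.1) i a * P p.1 a p.2) * Z (Fin.castLE hqr ℓ) p j)
        (fun u => rfl)]
      rw [Fintype.sum_prod_type, Fintype.sum_sum_type]
      congr 1
      · rw [Fintype.sum_prod_type]
        simp only [he1, hyd]
        apply Finset.sum_congr rfl
        intro s _
        simp only [Finset.sum_mul, Finset.mul_sum, mul_assoc]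
        exact Finset.sum_comm
      · rw [Fintype.sum_prod_type]
        simp only [he2]
  have hrle : (B : ℕ) ≤ m * α + (d - m) * β := by
    have h2 : M.rank ≤ N.rank := by
      rw [key]; exact N.rank_mul_le_left C
    have h3 : N.rank ≤ Fintype.card ((Fin m × Fin α) ⊕ (Fin (d - m) × Fin β)) :=
      N.rank_le_card_width
    simp only [Fintype.card_sum, Fintype.card_prod, Fintype.card_fin] at h3
    omega
  have hkmq : k = m + q := by omega
  have hdm : d - m = d - k + q := by omega
  have : m * α + q * α ≤ m * α + (d - m) * β := by
    calc m * α + q * α = (m + q) * α := (add_mul m q α).symm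
    _ = k * α := by rw [← hkmq]
    _ = B := hB.symm
    _ ≤ m * α + (d - m) * β := hrle
  have h := Nat.le_of_add_le_add_left this
  rw [hdm] at h
  calc q * α ≤ (d - k + q) * β := h
  _ = β * (d - k + q) := mul_comm _ _
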